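/- arXiv:1308.0191 — 2 statements merged into one kernel-verified Lean document; each statement's English description precedes it below -/
import Mathlib

section
/- If x : ℝ → ℝ² is differentiable, satisfies ẋ(t) = -k·x(t) + k·sat^δ(x(t) + w(t)/k) with k > 0, δ > 0, and any function w, and |x(0)| ≤ δ, then |x(t)| ≤ δ for all t ≥ 0. -/
open Classical in
noncomputable def sat {n : ℕ} (δ : ℝ) (x : EuclideanSpace ℝ (Fin n)) :
    EuclideanSpace ℝ (Fin n) :=
  if x = 0 then 0 else min 1 (δ / ‖x‖) • x

lemma norm_sat_le {n : ℕ} (δ : ℝ) (hδ : 0 ≤ δ) (x : EuclideanSpace ℝ (Fin n)) :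
    ‖sat δ x‖ ≤ δ := by
  unfold sat
  split_ifs with h
  · simpa using hδ
  · have hx : 0 < ‖x‖ := norm_pos_iff.mpr h
    have hmin : 0 ≤ min 1 (δ / ‖x‖) := le_min zero_le_one (div_nonneg hδ hx.le)
    rw [norm_smul, Real.norm_of_nonneg hmin]
    rcases le_total 1 (δ / ‖x‖) with h1 | h1
    · rw [min_eq_left h1]
      have : ‖x‖ ≤ δ := by
        rw [le_div_iff₀ hx] at h1; linarith
      simpa using this
    · rw [min_eq_right h1, div_mul_cancel₀ _ hx.ne']

theorem tilt_saturation_invariance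
    (k δ : ℝ) (hk : 0 < k) (hδ0 : 0 < δ) (hδ1 : δ < 1)
    (x w : ℝ → EuclideanSpace ℝ (Fin 2))
    (hw : Continuous w)
    (hx : ∀ t : ℝ, HasDerivAt x (-k • x t + k • sat δ (x t + k⁻¹ • w t)) t)
    (h0 : ‖x 0‖ ≤ δ) :
    ∀ t : ℝ, 0 ≤ t → ‖x t‖ ≤ δ := by
  intro T hT
  set x' : ℝ → EuclideanSpace ℝ (Fin 2) :=
    fun t => -k • x t + k • sat δ (x t + k⁻¹ • w t) with hx'def
  set V : ℝ → ℝ := fun s => (inner ℝ (x s) (x s) : ℝ) with hVdef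
  have hVval : ∀ s, V s = ‖x s‖ ^ 2 := fun s => real_inner_self_eq_norm_sq (x s)
  have hV : ∀ t : ℝ, HasDerivAt V
      ((inner ℝ (x t) (x' t) : ℝ) + (inner ℝ (x' t) (x t) : ℝ)) t :=
    fun t => (hx t).inner ℝ (hx t)
  have hVcont : ContinuousOn V (Set.Icc 0 T) :=
    (continuous_iff_continuousAt.mpr fun t => (hV t).continuousAt).continuousOn
  -- derivative bound at contact points
  have key : ∀ ε > 0, V T ≤ δ ^ 2 + ε := by
    intro ε hε
    have := image_le_of_deriv_right_lt_deriv_boundary (f := V)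
      (f' := fun t => (inner ℝ (x t) (x' t) : ℝ) + (inner ℝ (x' t) (x t) : ℝ))
      (a := 0) (b := T) hVcont
      (fun t _ => (hV t).hasDerivWithinAt)
      (B := fun _ => δ ^ 2 + ε) (B' := fun _ => 0)
      (by
        show V 0 ≤ δ ^ 2 + ε
        rw [hVval]
        nlinarith [mul_self_le_mul_self (norm_nonneg (x 0)) h0])
      (fun t => hasDerivAt_const t _)
      ?_ (Set.right_mem_Icc.mpr hT)
    · exact this
    intro t _ hc
    have hnorm : δ < ‖x t‖ := by
      have h2 : ‖x t‖ ^ 2 = δ ^ 2 + ε := by rw [← hVval]; exact hc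
      nlinarith [norm_nonneg (x t)]
    have hsat : (inner ℝ (x t) (sat δ (x t + k⁻¹ • w t)) : ℝ) ≤ ‖x t‖ * δ := by
      calc (inner ℝ (x t) (sat δ (x t + k⁻¹ • w t)) : ℝ)
          ≤ ‖x t‖ * ‖sat δ (x t + k⁻¹ • w t)‖ := real_inner_le_norm _ _
        _ ≤ ‖x t‖ * δ := by
            exact mul_le_mul_of_nonneg_left (norm_sat_le δ hδ0.le _) (norm_nonneg _)
    have hxx' : (inner ℝ (x t) (x' t) : ℝ) ≤ -k * ‖x t‖ ^ 2 + k * (‖x t‖ * δ) := by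
      have : (inner ℝ (x t) (x' t) : ℝ)
          = -k * (inner ℝ (x t) (x t) : ℝ)
            + k * (inner ℝ (x t) (sat δ (x t + k⁻¹ • w t)) : ℝ) := by
        simp [hx'def, inner_add_right, real_inner_smul_right]
      rw [this, real_inner_self_eq_norm_sq]
      nlinarith
    have hsym : (inner ℝ (x' t) (x t) : ℝ) = (inner ℝ (x t) (x' t) : ℝ) :=
      real_inner_comm _ _
    show (inner ℝ (x t) (x' t) : ℝ) + (inner ℝ (x' t) (x t) : ℝ) < 0
    rw [hsym]
    have : -k * ‖x t‖ ^ 2 + k * (‖x t‖ * δ) < 0 := by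
      nlinarith [mul_pos hk (mul_pos (hδ0.trans hnorm) (sub_pos.mpr hnorm))]
    linarith
  have hVT : V T ≤ δ ^ 2 := le_of_forall_pos_le_add key
  rw [hVval] at hVT
  nlinarith [norm_nonneg (x T)]
end

section
/- Consider the velocity error dynamics m(d/dt)ṽ = -T̄u + F with F = T_r u_r (T_r = |F| > 0, u_r = F/|F|), closed-loop controls T̄ = T_r(u·u_r) + k₁m(u·ṽ) and thrust-direction kinematics such that d/dt(u·u_r) is as induced by ω_I^u in equation (11). Then the Lyapunov function L = (T_r²/(k₂m²))(1 - u·u_r) + (1/2)|ṽ|² satisfies L̇ = -(k₃/k₂)(T_r²/m²)·|u×u_r|²/(1+u·u_r)² - k₁(u·ṽ)² ≤ 0. -/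
open Matrix

lemma lagrange_cross (u ur : Fin 3 → ℝ) :
    (crossProduct u ur) ⬝ᵥ (crossProduct u ur)
      = (u ⬝ᵥ u) * (ur ⬝ᵥ ur) - (u ⬝ᵥ ur)^2 := by
  simp [cross_apply, dotProduct, Fin.sum_univ_three]; ring

lemma key_cross (u vt ur ur' : Fin 3 → ℝ) (α β : ℝ) :
    (crossProduct (α • crossProduct u vt + β • crossProduct u ur
        - crossProduct u (crossProduct u (crossProduct ur ur'))) u) ⬝ᵥ ur
    = α * ((u ⬝ᵥ u) * (vt ⬝ᵥ ur) - (u ⬝ᵥ ur) * (u ⬝ᵥ vt))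
      + β * ((crossProduct u ur) ⬝ᵥ (crossProduct u ur))
      + (u ⬝ᵥ u) * ((ur ⬝ᵥ u) * (ur ⬝ᵥ ur') - (ur ⬝ᵥ ur) * (u ⬝ᵥ ur')) := by
  simp [cross_apply, dotProduct, Fin.sum_univ_three]; ring

lemma dot_deriv {f g : ℝ → Fin 3 → ℝ} {f' g' : Fin 3 → ℝ} {t : ℝ}
    (hf : HasDerivAt f f' t) (hg : HasDerivAt g g' t) :
    HasDerivAt (fun s => f s ⬝ᵥ g s) (f' ⬝ᵥ g t + f t ⬝ᵥ g' ) t := by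
  have hfi := hasDerivAt_pi.mp hf
  have hgi := hasDerivAt_pi.mp hg
  have h := (((hfi 0).mul (hgi 0)).add ((hfi 1).mul (hgi 1))).add ((hfi 2).mul (hgi 2))
  convert h using 1
  · rfl
  · rfl
  · ext s; simp [dotProduct, Fin.sum_univ_three]
  · simp [dotProduct, Fin.sum_univ_three]; ring

theorem velocity_tracking_lyapunov_derivative
    (m k₁ k₂ k₃ c : ℝ) (hm : 0 < m) (hk₁ : 0 < k₁) (hk₂ : 0 < k₂)
    (hk₃ : 0 < k₃) (hc : 0 < c)
    (vt vt' u u' F F' ur ur' : ℝ → Fin 3 → ℝ) (Tr Tr' : ℝ → ℝ)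
    (hunit : ∀ t, u t ⬝ᵥ u t = 1)
    (hF : ∀ t, HasDerivAt F (F' t) t)
    (hFlow : ∀ t, c ≤ Real.sqrt (F t ⬝ᵥ F t))
    (hTr : ∀ t, Tr t = Real.sqrt (F t ⬝ᵥ F t))
    (hTr' : ∀ t, HasDerivAt Tr (Tr' t) t)
    (hur : ∀ t, ur t = (Tr t)⁻¹ • F t)
    (hur' : ∀ t, HasDerivAt ur (ur' t) t)
    (hang : ∀ t, 0 < 1 + u t ⬝ᵥ ur t)
    (hvt : ∀ t, HasDerivAt vt (vt' t) t)
    (hdyn : ∀ t, m • vt' t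
        = -(Tr t * (u t ⬝ᵥ ur t) + k₁ * m * (u t ⬝ᵥ vt t)) • u t + F t)
    (hu : ∀ t, HasDerivAt u (u' t) t)
    (hkin : ∀ t, u' t = crossProduct
        ((k₂ * m / Tr t) • crossProduct (u t) (vt t)
          + ((k₃ + 2 * Tr' t * (1 + u t ⬝ᵥ ur t) / Tr t)
              / (1 + u t ⬝ᵥ ur t)^2) • crossProduct (u t) (ur t)
          - crossProduct (u t)
              (crossProduct (u t) (crossProduct (ur t) (ur' t))))
        (u t)) :
    (∀ t, HasDerivAt
        (fun s => (Tr s)^2 / (k₂ * m^2) * (1 - u s ⬝ᵥ ur s)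
            + (1/2) * (vt s ⬝ᵥ vt s))
        (-(k₃ / k₂) * ((Tr t)^2 / m^2)
            * ((crossProduct (u t) (ur t)) ⬝ᵥ (crossProduct (u t) (ur t)))
            / (1 + u t ⬝ᵥ ur t)^2
          - k₁ * (u t ⬝ᵥ vt t)^2) t)
      ∧ ∀ t, (-(k₃ / k₂) * ((Tr t)^2 / m^2)
            * ((crossProduct (u t) (ur t)) ⬝ᵥ (crossProduct (u t) (ur t)))
            / (1 + u t ⬝ᵥ ur t)^2
          - k₁ * (u t ⬝ᵥ vt t)^2) ≤ 0 := by
  -- basic positivity facts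
  have hTpos : ∀ t, 0 < Tr t := fun t => by
    rw [hTr t]; exact lt_of_lt_of_le hc (hFlow t)
  have hFF : ∀ t, Tr t ^ 2 = F t ⬝ᵥ F t := fun t => by
    rw [hTr t, sq]
    refine Real.mul_self_sqrt ?_
    have : F t ⬝ᵥ F t = (F t 0)^2 + (F t 1)^2 + (F t 2)^2 := by
      simp [dotProduct, Fin.sum_univ_three]; ring
    rw [this]; positivity
  have hurur : ∀ t, ur t ⬝ᵥ ur t = 1 := fun t => by
    have hT := (hTpos t).ne'
    rw [hur t, smul_dotProduct, dotProduct_smul, ← hFF t, smul_eq_mul, smul_eq_mul]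
    field_simp
  have hFur : ∀ t, F t = Tr t • ur t := fun t => by
    rw [hur t, smul_smul, mul_inv_cancel₀ (hTpos t).ne', one_smul]
  -- ur ⬝ᵥ ur' = 0
  have hurur' : ∀ t, ur t ⬝ᵥ ur' t = 0 := by
    intro t
    have h1 : HasDerivAt (fun s => ur s ⬝ᵥ ur s) (ur' t ⬝ᵥ ur t + ur t ⬝ᵥ ur' t) t :=
      dot_deriv (hur' t) (hur' t)
    have h2 : HasDerivAt (fun s : ℝ => ur s ⬝ᵥ ur s) 0 t := by
      have := hasDerivAt_const t (1 : ℝ)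
      exact this.congr_of_eventuallyEq (Filter.Eventually.of_forall fun s => hurur s)
    have h3 := h1.unique h2
    rw [dotProduct_comm] at h3
    linarith
  -- vt ⬝ᵥ vt'
  have hvtdot : ∀ t, m * (vt t ⬝ᵥ vt' t)
      = -(Tr t * (u t ⬝ᵥ ur t) + k₁ * m * (u t ⬝ᵥ vt t)) * (u t ⬝ᵥ vt t)
        + Tr t * (vt t ⬝ᵥ ur t) := by
    intro t
    have := congrArg (fun w => vt t ⬝ᵥ w) (hdyn t)
    simpa [dotProduct_smul, dotProduct_add, hFur t, smul_eq_mul, dotProduct_comm (vt t) (u t),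
      mul_comm] using this
  -- u' ⬝ᵥ ur
  have hu'ur : ∀ t, u' t ⬝ᵥ ur t
      = (k₂ * m / Tr t) * ((vt t ⬝ᵥ ur t) - (u t ⬝ᵥ ur t) * (u t ⬝ᵥ vt t))
        + ((k₃ + 2 * Tr' t * (1 + u t ⬝ᵥ ur t) / Tr t) / (1 + u t ⬝ᵥ ur t)^2)
            * ((crossProduct (u t) (ur t)) ⬝ᵥ (crossProduct (u t) (ur t)))
        - u t ⬝ᵥ ur' t := by
    intro t
    rw [hkin t, key_cross, hunit t, hurur t, dotProduct_comm (ur t) (u t), hurur' t]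
    ring
  refine ⟨fun t => ?_, fun t => ?_⟩
  · -- derivative
    have hD : HasDerivAt
        (fun s => (Tr s)^2 / (k₂ * m^2) * (1 - u s ⬝ᵥ ur s) + (1/2) * (vt s ⬝ᵥ vt s))
        ((2 * Tr t ^ 1 * Tr' t) / (k₂ * m^2) * (1 - u t ⬝ᵥ ur t)
          + Tr t ^2 / (k₂ * m^2) * (-(u' t ⬝ᵥ ur t + u t ⬝ᵥ ur' t))
          + (1/2) * (vt' t ⬝ᵥ vt t + vt t ⬝ᵥ vt' t)) t := by
      exact ((((hTr' t).pow 2).div_const (k₂ * m^2)).mul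
        ((dot_deriv (hu t) (hur' t)).const_sub 1)).add
        ((dot_deriv (hvt t) (hvt t)).const_mul (1/2))
    convert hD using 1
    have hT : Tr t ≠ 0 := (hTpos t).ne'
    have hA : 1 + u t ⬝ᵥ ur t ≠ 0 := (hang t).ne'
    have hX : (crossProduct (u t) (ur t)) ⬝ᵥ (crossProduct (u t) (ur t))
        = 1 - (u t ⬝ᵥ ur t)^2 := by
      rw [lagrange_cross, hunit t, hurur t]; ring
    have hd : vt t ⬝ᵥ vt' t
        = (-(Tr t * (u t ⬝ᵥ ur t) + k₁ * m * (u t ⬝ᵥ vt t)) * (u t ⬝ᵥ vt t)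
            + Tr t * (vt t ⬝ᵥ ur t)) / m := by
      rw [eq_div_iff hm.ne']
      linarith [hvtdot t]
    rw [hu'ur t, hX, dotProduct_comm (vt' t) (vt t), hd]
    set a := u t ⬝ᵥ ur t with ha
    set b := u t ⬝ᵥ vt t with hb
    set r := vt t ⬝ᵥ ur t with hr
    set e := u t ⬝ᵥ ur' t with he
    set T := Tr t with hTdef
    set T' := Tr' t with hT'def
    field_simp
    ring
  · -- nonpositivity
    have hX : 0 ≤ (crossProduct (u t) (ur t)) ⬝ᵥ (crossProduct (u t) (ur t)) := by
      have h : (crossProduct (u t) (ur t)) ⬝ᵥ (crossProduct (u t) (ur t))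
          = (crossProduct (u t) (ur t) 0)^2 + (crossProduct (u t) (ur t) 1)^2
            + (crossProduct (u t) (ur t) 2)^2 := by
        simp [dotProduct, Fin.sum_univ_three]; ring
      rw [h]; positivity
    have hA := hang t
    have hT := hTpos t
    have h1 : 0 ≤ (k₃ / k₂) * ((Tr t)^2 / m^2)
        * ((crossProduct (u t) (ur t)) ⬝ᵥ (crossProduct (u t) (ur t)))
        / (1 + u t ⬝ᵥ ur t)^2 := by positivity
    have h2 : 0 ≤ k₁ * (u t ⬝ᵥ vt t)^2 := by positivity
    have h3 : -(k₃ / k₂) * ((Tr t)^2 / m^2)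
            * ((crossProduct (u t) (ur t)) ⬝ᵥ (crossProduct (u t) (ur t)))
            / (1 + u t ⬝ᵥ ur t)^2
          - k₁ * (u t ⬝ᵥ vt t)^2
        = -((k₃ / k₂) * ((Tr t)^2 / m^2)
            * ((crossProduct (u t) (ur t)) ⬝ᵥ (crossProduct (u t) (ur t)))
            / (1 + u t ⬝ᵥ ur t)^2 + k₁ * (u t ⬝ᵥ vt t)^2) := by ring
    rw [h3]
    exact neg_nonpos.mpr (add_nonneg h1 h2)
end
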